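/- arXiv:2205.03976 — 2 statements merged into one kernel-verified Lean document; each statement's English description precedes it below -/
import Mathlib

section
/- Let p be a prime and let B be the quaternion algebra over ℚ with ℚ-basis 1, i, j, k, where i² = −3, j² = −p, and k = ij = −ji. Let O be the ℤ-submodule of B spanned by 1, (−1+i)/2, j, (3+i+3j+k)/6. If θ ∈ O is nonzero and anticommutes with i (that is, iθ = −θi), then θ = (m/2)j + (n/2)k for some integers m, n with m ≡ n (mod 2), and hence the reduced norm of θ satisfies Nrd(θ) = (p/4)(m² + 3n²) ≥ p. -/
open Quaternion

/-- The quaternion algebra `(-3, -p | ℚ)`. -/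
@[reducible] def B0 (p : ℕ) := ℍ[ℚ, -3, -(p : ℚ)]

/-- The basis element `i` of `B0 p`, with `i² = -3`. -/
def qi (p : ℕ) : B0 p := ⟨0, 1, 0, 0⟩

/-- The basis element `j` of `B0 p`, with `j² = -p`. -/
def qj (p : ℕ) : B0 p := ⟨0, 0, 1, 0⟩

/-- The basis element `k = ij = -ji` of `B0 p`. -/
def qk (p : ℕ) : B0 p := ⟨0, 0, 0, 1⟩

/-- The maximal order `O = ⟨1, (-1+i)/2, j, (3+i+3j+k)/6⟩_ℤ` in `(-3,-p|ℚ)`,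
the endomorphism ring of `E₀`. -/
def O0 (p : ℕ) : Submodule ℤ (B0 p) :=
  Submodule.span ℤ
    ({1, (2 : ℚ)⁻¹ • (-1 + qi p), qj p,
      (6 : ℚ)⁻¹ • ((3 : B0 p) + qi p + (3 : ℚ) • qj p + qk p)} : Set (B0 p))

lemma aux_one_le_sq (t : ℤ) (ht : t ≠ 0) : 1 ≤ t ^ 2 := by
  rcases lt_or_gt_of_ne ht with h | h
  · nlinarith
  · nlinarith

lemma aux_four_le (m n : ℤ) (h : ¬(m = 0 ∧ n = 0)) (hpar : m % 2 = n % 2) :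
    4 ≤ m ^ 2 + 3 * n ^ 2 := by
  rcases eq_or_ne n 0 with rfl | hn
  · have hm : m ≠ 0 := by tauto
    obtain ⟨t, rfl⟩ : ∃ t, m = 2 * t := ⟨m / 2, by omega⟩
    have ht : t ≠ 0 := by rintro rfl; simp at hm
    nlinarith [aux_one_le_sq t ht]
  · rcases Int.even_or_odd n with ⟨s, hs⟩ | ⟨s, hs⟩
    · subst hs
      have hs0 : s ≠ 0 := by omega
      nlinarith [aux_one_le_sq s hs0, sq_nonneg m]
    · have hm : m ≠ 0 := by omega
      nlinarith [aux_one_le_sq m hm, aux_one_le_sq n hn]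

/-- If a nonzero `θ` in the order `⟨1, (-1+i)/2, j, (3+i+3j+k)/6⟩_ℤ` of `(-3,-p|ℚ)`
anticommutes with `i`, then `θ = (m/2) j + (n/2) k` with `m, n ∈ ℤ` of the same
parity, and its reduced norm is `(p/4)(m² + 3n²) ≥ p`. -/
theorem stmt_1 (p : ℕ) (hp : p.Prime) (θ : B0 p) (hθO : θ ∈ O0 p) (hθ0 : θ ≠ 0)
    (hanti : qi p * θ = -(θ * qi p)) :
    ∃ m n : ℤ, θ = ((m : ℚ) / 2) • qj p + ((n : ℚ) / 2) • qk p ∧ m % 2 = n % 2 ∧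
      (θ * star θ).re = ((p : ℚ) / 4) * ((m : ℚ) ^ 2 + 3 * (n : ℚ) ^ 2) ∧
      (p : ℚ) ≤ (θ * star θ).re := by
  -- extract integer coordinates
  rw [O0, Submodule.mem_span_insert] at hθO
  obtain ⟨a, z1, hz1, hθ1⟩ := hθO
  rw [Submodule.mem_span_insert] at hz1
  obtain ⟨b, z2, hz2, hz1eq⟩ := hz1
  rw [Submodule.mem_span_insert] at hz2
  obtain ⟨c, z3, hz3, hz2eq⟩ := hz2
  rw [Submodule.mem_span_singleton] at hz3
  obtain ⟨d, hz3eq⟩ := hz3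
  have h3 : (3 : B0 p) = (⟨3,0,0,0⟩ : B0 p) := rfl
  have hcomp : θ = ⟨(a : ℚ) - b / 2 + d / 2, b / 2 + d / 6, c + d / 2, d / 6⟩ := by
    rw [hθ1, hz1eq, hz2eq, ← hz3eq]
    ext <;> simp [qi, qj, qk, h3] <;> ring
  -- anticommutation forces re and imI to vanish
  have hre : θ.re = 0 := by
    have h := congrArg QuaternionAlgebra.imI hanti
    simp [qi, QuaternionAlgebra.imI_mul] at h
    linarith
  have himI : θ.imI = 0 := by
    have h := congrArg QuaternionAlgebra.re hanti
    simp [qi, QuaternionAlgebra.re_mul] at h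
    linarith
  have hx0 : (b : ℚ) / 2 + d / 6 = 0 := by rw [hcomp] at himI; exact himI
  have hw0 : (a : ℚ) - b / 2 + d / 2 = 0 := by rw [hcomp] at hre; exact hre
  have hdq : (d : ℚ) = -3 * b := by linarith
  have hd : d = -3 * b := by exact_mod_cast hdq
  have hrep : θ = ((↑(2 * c - 3 * b) : ℚ) / 2) • qj p + ((↑(-b : ℤ) : ℚ) / 2) • qk p := by
    rw [hcomp]
    ext <;> simp [qj, qk] <;> push_cast [hd] <;> ring_nf <;> linarith
  have hnorm : (θ * star θ).re =
      ((p : ℚ) / 4) * ((↑(2 * c - 3 * b) : ℚ) ^ 2 + 3 * (↑(-b : ℤ) : ℚ) ^ 2) := by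
    rw [hcomp]
    simp [QuaternionAlgebra.re_mul]
    push_cast [hd]
    ring_nf
    nlinarith [hw0]
  have hne : ¬(2 * c - 3 * b = 0 ∧ -b = 0) := by
    rintro ⟨h1, h2⟩
    apply hθ0
    rw [hrep, h1, h2]
    simp
  have h4 : 4 ≤ (2 * c - 3 * b) ^ 2 + 3 * (-b) ^ 2 := aux_four_le _ _ hne (by omega)
  refine ⟨2 * c - 3 * b, -b, hrep, by omega, hnorm, ?_⟩
  rw [hnorm]
  have h4q : (4 : ℚ) ≤ (↑(2 * c - 3 * b) : ℚ) ^ 2 + 3 * (↑(-b : ℤ) : ℚ) ^ 2 := by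
    exact_mod_cast h4
  have hp0 : (0 : ℚ) ≤ p := by positivity
  nlinarith
end

section
/- Let p be a prime and let B be the quaternion algebra over ℚ with ℚ-basis 1, i, j, k, where i² = −3, j² = −p, and k = ij = −ji. Every element of the ℤ-span of {1, (−1+i)/2, j, (3+i+3j+k)/6} that does not lie in the ℤ-span of {1, (−1+i)/2} has reduced norm strictly greater than p/3. -/
open Quaternion

lemma sq1' (x : ℤ) (h : x ≠ 0) : 1 ≤ x^2 := by
  rcases lt_or_gt_of_ne h with h|h <;> nlinarith

lemma key_ineq (p a b c d : ℤ) (hp : 2 ≤ p) (h : ¬(c = 0 ∧ d = 0)) :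
    12*p < 9*(2*a-b+d)^2 + 3*(3*b+d)^2 + p*(9*(2*c+d)^2+3*d^2) := by
  have hA : 0 ≤ 9*(2*a-b+d)^2 := by positivity
  by_cases h3 : (3 : ℤ) ∣ d
  · obtain ⟨e, rfl⟩ := h3
    by_cases he : e = 0
    · subst he
      have hc : c ≠ 0 := by simpa using h
      have h1 := sq1' c hc
      nlinarith [sq_nonneg (3*b), sq_nonneg (2*c)]
    · have h1 := sq1' e he
      nlinarith [sq_nonneg (3*b+3*e), sq_nonneg (2*c+3*e)]
  · have hd3 : 3*b+d ≠ 0 := fun hh => h3 ⟨-b, by linarith⟩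
    have h1 := sq1' _ hd3
    rcases Int.even_or_odd d with ⟨e, rfl⟩ | ⟨e, rfl⟩
    · have he : e ≠ 0 := by rintro rfl; exact h3 ⟨0, by ring⟩
      have h2 := sq1' e he
      nlinarith [sq_nonneg (2*c+(e+e))]
    · have hu : 2*c+(2*e+1) ≠ 0 := by omega
      have h2 := sq1' _ hu
      have h4 : 1 ≤ (2*e+1)^2 := sq1' _ (by omega)
      nlinarith

/-- Every element of the order `⟨1, (-1+i)/2, j, (3+i+3j+k)/6⟩_ℤ` of `(-3,-p|ℚ)`
not lying in the suborder `⟨1, (-1+i)/2⟩_ℤ` has reduced norm strictly greater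
than `p/3`. -/
theorem stmt_3 (p : ℕ) (hp : p.Prime) (θ : B0 p) (hθO : θ ∈ O0 p)
    (hθ : θ ∉ Submodule.span ℤ ({1, (2 : ℚ)⁻¹ • (-1 + qi p)} : Set (B0 p))) :
    (p : ℚ) / 3 < (θ * star θ).re := by
  rw [O0, Submodule.mem_span_insert] at hθO
  obtain ⟨a, θ1, h1, rfl⟩ := hθO
  rw [Submodule.mem_span_insert] at h1
  obtain ⟨b, θ2, h2, rfl⟩ := h1
  rw [Submodule.mem_span_insert] at h2
  obtain ⟨c, θ3, h3, rfl⟩ := h2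
  rw [Submodule.mem_span_singleton] at h3
  obtain ⟨d, rfl⟩ := h3
  have hcd : ¬(c = 0 ∧ d = 0) := by
    rintro ⟨rfl, rfl⟩
    apply hθ
    simp only [zero_smul, add_zero]
    exact Submodule.add_mem _
      (Submodule.smul_mem _ _ (Submodule.subset_span (by simp)))
      (Submodule.smul_mem _ _ (Submodule.subset_span (by simp)))
  have hkey : (12*(p:ℚ)) < 9*((2*a-b+d : ℤ):ℚ)^2 + 3*((3*b+d : ℤ):ℚ)^2
      + (p:ℚ)*(9*((2*c+d : ℤ):ℚ)^2+3*((d:ℤ):ℚ)^2) := by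
    exact_mod_cast key_ineq p a b c d (by exact_mod_cast hp.two_le) hcd
  rw [div_lt_iff₀ (by norm_num : (0:ℚ) < 3)]
  simp only [QuaternionAlgebra.re_mul, QuaternionAlgebra.re_star, QuaternionAlgebra.imI_star, QuaternionAlgebra.imJ_star, QuaternionAlgebra.imK_star]
  have e1 : (3 : B0 p).re = 3 := rfl
  have e2 : (3 : B0 p).imI = 0 := rfl
  have e3 : (3 : B0 p).imJ = 0 := rfl
  have e4 : (3 : B0 p).imK = 0 := rfl
  simp [qi, qj, qk, e1, e2, e3, e4]
  push_cast at hkey ⊢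
  nlinarith [hkey]
end
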